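/- For every k ∈ (0,1), the Landen-type identity (1+k)·K(k) = K(2√k/(1+k)) holds, where K is the complete elliptic integral of the first kind. -/

import Mathlib

open MeasureTheory Set Filter Topology intervalIntegral

/-- The complete elliptic integral of the first kind. -/
noncomputable def ellipticK (k : ℝ) : ℝ :=
  ∫ t in (0:ℝ)..1, 1 / Real.sqrt ((1 - t^2) * (1 - k^2 * t^2))

/-- The integrand of `ellipticK m` is interval integrable on `[0,1]` for `0 ≤ m < 1`. -/
private lemma landen_integrable {m : ℝ} (hm0 : 0 ≤ m) (hm1 : m < 1) :
    IntervalIntegrable (fun t => 1 / Real.sqrt ((1 - t^2) * (1 - m^2 * t^2)))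
      volume 0 1 := by
  have hm2 : m ^ 2 < 1 := by nlinarith
  have hbase : IntervalIntegrable (fun x : ℝ => x ^ (-(1/2) : ℝ)) volume 0 1 :=
    intervalIntegrable_rpow' (by norm_num)
  have hsub : IntervalIntegrable (fun x : ℝ => (1 - x) ^ (-(1/2) : ℝ)) volume 0 1 := by
    have := (hbase.comp_sub_left 1).symm
    simpa using this
  have hg : IntervalIntegrable
      (fun x : ℝ => (1 - m^2)^(-(1/2):ℝ) * (1 - x) ^ (-(1/2) : ℝ)) volume 0 1 :=
    hsub.const_mul _
  refine hg.mono_fun' ?_ ?_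
  · refine Measurable.aestronglyMeasurable ?_
    exact measurable_const.div ((Real.continuous_sqrt.comp (by fun_prop)).measurable)
  · rw [Set.uIoc_of_le (by norm_num : (0:ℝ) ≤ 1)]
    refine (ae_restrict_iff' measurableSet_Ioc).2 (Filter.Eventually.of_forall ?_)
    intro x hx
    have hx0 : 0 < x := hx.1
    have hx1 : x ≤ 1 := hx.2
    have hP0 : 0 ≤ (1 - x^2) * (1 - m^2 * x^2) :=
      mul_nonneg (by nlinarith) (by nlinarith)
    show ‖1 / Real.sqrt ((1 - x^2) * (1 - m^2 * x^2))‖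
      ≤ (1 - m^2)^(-(1/2):ℝ) * (1 - x) ^ (-(1/2):ℝ)
    have hnorm : ‖1 / Real.sqrt ((1 - x^2) * (1 - m^2 * x^2))‖
        = 1 / Real.sqrt ((1 - x^2) * (1 - m^2 * x^2)) := by
      rw [Real.norm_eq_abs, abs_of_nonneg]
      positivity
    rw [hnorm]
    rcases eq_or_lt_of_le hx1 with h1 | h1
    · have e1 : (1 - x^2) * (1 - m^2 * x^2) = 0 := by rw [h1]; norm_num
      have e2 : (1 - x) = 0 := by rw [h1]; norm_num
      rw [e1, e2, Real.sqrt_zero, div_zero,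
        Real.zero_rpow (by norm_num : (-(1/2):ℝ) ≠ 0), mul_zero]
    · have hx1' : 0 < 1 - x := by linarith
      have hm1' : 0 < 1 - m^2 := by nlinarith
      have h3 : 1 - m^2 ≤ (1 + x) * (1 - m^2 * x^2) := by
        nlinarith [mul_nonneg hx0.le (by nlinarith : (0:ℝ) ≤ 1 - m^2 * x^2),
          mul_nonneg (sq_nonneg m) (by nlinarith : (0:ℝ) ≤ 1 - x^2)]
      have h4 := mul_le_mul_of_nonneg_left h3 hx1'.le
      have hkey : (1 - m^2) * (1 - x) ≤ (1 - x^2) * (1 - m^2 * x^2) := by nlinarith [h4]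
      have hrw : ∀ a : ℝ, 0 < a → a ^ (-(1/2):ℝ) = 1 / Real.sqrt a := by
        intro a ha
        rw [Real.rpow_neg ha.le, Real.sqrt_eq_rpow]
        exact (one_div _).symm
      rw [hrw _ hm1', hrw _ hx1']
      have hposb : 0 < Real.sqrt ((1 - m^2) * (1 - x)) := Real.sqrt_pos.2 (by positivity)
      have := one_div_le_one_div_of_le hposb (Real.sqrt_le_sqrt hkey)
      calc 1 / Real.sqrt ((1 - x^2) * (1 - m^2 * x^2))
          ≤ 1 / Real.sqrt ((1 - m^2) * (1 - x)) := this
        _ = 1 / Real.sqrt (1 - m^2) * (1 / Real.sqrt (1 - x)) := by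
            rw [Real.sqrt_mul hm1'.le]
            rw [one_div, mul_inv, ← one_div, ← one_div, one_div, one_div]

set_option maxHeartbeats 1600000 in
/-- Change of variables (Landen substitution) on a proper subinterval `[0, b]`, `b < 1`. -/
private lemma landen_sub {k : ℝ} (hk0 : 0 < k) (hk1 : k < 1) {b : ℝ}
    (hb0 : 0 ≤ b) (hb1 : b < 1) :
    (1 + k) * ∫ s in (0:ℝ)..b, 1 / Real.sqrt ((1 - s^2) * (1 - k^2 * s^2))
      = ∫ t in (0:ℝ)..((1 + k) * b / (1 + k * b^2)),
          1 / Real.sqrt ((1 - t^2) * (1 - (2 * Real.sqrt k / (1 + k))^2 * t^2)) := by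
  have h1k : (0:ℝ) < 1 + k := by linarith
  set k₁ : ℝ := 2 * Real.sqrt k / (1 + k) with hk₁def
  have hk₁sq : k₁ ^ 2 = 4 * k / (1 + k)^2 := by
    rw [hk₁def, div_pow, mul_pow, Real.sq_sqrt hk0.le]; ring
  have hk₁0 : 0 ≤ k₁ := div_nonneg (by positivity) h1k.le
  have hk₁1 : k₁ < 1 := by
    rw [hk₁def, div_lt_one h1k]
    have hs1 : Real.sqrt k < 1 := by
      rw [show (1:ℝ) = Real.sqrt 1 by simp]
      exact Real.sqrt_lt_sqrt hk0.le hk1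
    nlinarith [Real.sq_sqrt hk0.le, Real.sqrt_nonneg k]
  set φ : ℝ → ℝ := fun s => (1 + k) * s / (1 + k * s^2) with hφdef
  set φ' : ℝ → ℝ := fun s => (1 + k) * (1 - k * s^2) / (1 + k * s^2)^2 with hφ'def
  set g : ℝ → ℝ := fun t => 1 / Real.sqrt ((1 - t^2) * (1 - k₁^2 * t^2)) with hgdef
  have huIcc : uIcc (0:ℝ) b = Icc 0 b := uIcc_of_le hb0
  have hdenom : ∀ s : ℝ, (0:ℝ) < 1 + k * s^2 := fun s => by positivity
  have hderiv : ∀ x ∈ uIcc (0:ℝ) b, HasDerivAt φ (φ' x) x := by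
    intro x _
    have hne : (1 + k * x^2) ≠ 0 := (hdenom x).ne'
    have hu : HasDerivAt (fun s : ℝ => (1 + k) * s) (1 + k) x := by
      simpa using (hasDerivAt_id x).const_mul (1 + k)
    have hv : HasDerivAt (fun s : ℝ => 1 + k * s^2) (k * (2 * x)) x := by
      have := ((hasDerivAt_pow 2 x).const_mul k).const_add 1
      simpa using this
    have := hu.div hv hne
    refine this.congr_deriv ?_
    rw [hφ'def]
    field_simp
    ring
  have h' : ContinuousOn φ' (uIcc (0:ℝ) b) := by
    apply Continuous.continuousOn
    apply Continuous.div (by fun_prop) (by fun_prop)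
    intro x
    exact pow_ne_zero 2 (hdenom x).ne'
  have himg : ∀ s ∈ uIcc (0:ℝ) b, φ s ∈ Ico (0:ℝ) 1 := by
    intro s hs
    rw [huIcc] at hs
    have hs0 : 0 ≤ s := hs.1
    have hs1 : s < 1 := lt_of_le_of_lt hs.2 hb1
    constructor
    · exact div_nonneg (mul_nonneg h1k.le hs0) (hdenom s).le
    · rw [div_lt_one (hdenom s)]
      have hks : (0:ℝ) < 1 - k * s := by nlinarith
      nlinarith [mul_pos (by linarith : (0:ℝ) < 1 - s) hks]
  have hgcont : ContinuousOn g (Ico (0:ℝ) 1) := by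
    apply ContinuousOn.div continuousOn_const
      ((Real.continuous_sqrt.comp (by fun_prop)).continuousOn)
    intro t ht
    have ht0 : 0 ≤ t := ht.1
    have ht1 : t < 1 := ht.2
    have ht2 : t^2 < 1 := by nlinarith
    have hk2 : k₁^2 < 1 := by nlinarith
    have h5 : k₁^2 * t^2 < 1 := by
      nlinarith [mul_pos (by nlinarith : (0:ℝ) < 1 - k₁^2) (by nlinarith : (0:ℝ) < 1 - t^2),
        mul_nonneg (sq_nonneg k₁) (sq_nonneg t)]
    have : (0:ℝ) < (1 - t^2) * (1 - k₁^2 * t^2) := mul_pos (by linarith) (by linarith)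
    exact (Real.sqrt_pos.2 this).ne'
  have hg : ContinuousOn g (φ '' uIcc (0:ℝ) b) := by
    apply hgcont.mono
    rintro _ ⟨s, hs, rfl⟩
    exact himg s hs
  have key := integral_comp_smul_deriv' hderiv h' hg
  have hφ0 : φ 0 = 0 := by simp [hφdef]
  rw [hφ0] at key
  have hrhs : φ b = (1 + k) * b / (1 + k * b^2) := rfl
  rw [← hrhs, ← key]
  rw [← intervalIntegral.integral_const_mul]
  apply intervalIntegral.integral_congr
  intro s hs
  rw [huIcc] at hs
  have hs0 : 0 ≤ s := hs.1
  have hs1 : s < 1 := lt_of_le_of_lt hs.2 hb1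
  have hs2 : s^2 < 1 := by nlinarith
  have hA : (0:ℝ) < (1 - s^2) * (1 - k^2 * s^2) := by
    have : k^2 * s^2 < 1 := by
      nlinarith [mul_pos (by nlinarith : (0:ℝ) < 1 - k^2) (by linarith : (0:ℝ) < 1 - s^2),
        mul_nonneg (sq_nonneg k) (sq_nonneg s)]
    exact mul_pos (by linarith) (by linarith)
  have hd : (0:ℝ) < 1 + k * s^2 := hdenom s
  have hm : (0:ℝ) < 1 - k * s^2 := by nlinarith
  have key1 : (1 - (φ s)^2) * (1 - k₁^2 * (φ s)^2)
      = ((1 - s^2) * (1 - k^2 * s^2)) * ((1 - k * s^2) / (1 + k * s^2)^2)^2 := by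
    rw [hφdef, hk₁sq]
    field_simp
    ring
  have key2 : Real.sqrt ((1 - (φ s)^2) * (1 - k₁^2 * (φ s)^2))
      = Real.sqrt ((1 - s^2) * (1 - k^2 * s^2)) * ((1 - k * s^2) / (1 + k * s^2)^2) := by
    rw [key1, Real.sqrt_mul hA.le, Real.sqrt_sq (by positivity)]
  have hsqrtA : (0:ℝ) < Real.sqrt ((1 - s^2) * (1 - k^2 * s^2)) := Real.sqrt_pos.2 hA
  show (1 + k) * (1 / Real.sqrt ((1 - s^2) * (1 - k^2 * s^2))) = φ' s • (g ∘ φ) s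
  rw [smul_eq_mul, Function.comp_apply, hgdef]
  simp only []
  rw [key2, hφ'def]
  field_simp

theorem landen_identity (k : ℝ) (hk0 : 0 < k) (hk1 : k < 1) :
    (1 + k) * ellipticK k = ellipticK (2 * Real.sqrt k / (1 + k)) := by
  have h1k : (0:ℝ) < 1 + k := by linarith
  set k₁ : ℝ := 2 * Real.sqrt k / (1 + k) with hk₁def
  have hk₁0 : 0 ≤ k₁ := div_nonneg (by positivity) h1k.le
  have hk₁1 : k₁ < 1 := by
    rw [hk₁def, div_lt_one h1k]
    have hs1 : Real.sqrt k < 1 := by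
      rw [show (1:ℝ) = Real.sqrt 1 by simp]
      exact Real.sqrt_lt_sqrt hk0.le hk1
    nlinarith [Real.sq_sqrt hk0.le, Real.sqrt_nonneg k]
  set f : ℝ → ℝ := fun t => 1 / Real.sqrt ((1 - t^2) * (1 - k^2 * t^2)) with hfdef
  set g : ℝ → ℝ := fun t => 1 / Real.sqrt ((1 - t^2) * (1 - k₁^2 * t^2)) with hgdef
  have hintf : IntervalIntegrable f volume 0 1 := landen_integrable hk0.le hk1
  have hintg : IntervalIntegrable g volume 0 1 := landen_integrable hk₁0 hk₁1
  set F : ℝ → ℝ := fun b => ∫ s in (0:ℝ)..b, f s with hFdef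
  set G : ℝ → ℝ := fun c => ∫ t in (0:ℝ)..c, g t with hGdef
  have hF : ContinuousOn F (Icc (0:ℝ) 1) := by
    have := intervalIntegral.continuousOn_primitive_interval' hintf
      (left_mem_uIcc (a := (0:ℝ)) (b := 1))
    rwa [uIcc_of_le (by norm_num : (0:ℝ) ≤ 1)] at this
  have hG : ContinuousOn G (Icc (0:ℝ) 1) := by
    have := intervalIntegral.continuousOn_primitive_interval' hintg
      (left_mem_uIcc (a := (0:ℝ)) (b := 1))
    rwa [uIcc_of_le (by norm_num : (0:ℝ) ≤ 1)] at this
  set φ : ℝ → ℝ := fun s => (1 + k) * s / (1 + k * s^2) with hφdef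
  have hdenom : ∀ s : ℝ, (0:ℝ) < 1 + k * s^2 := fun s => by positivity
  have hφcont : Continuous φ := by
    apply Continuous.div (by fun_prop) (by fun_prop)
    intro x; exact (hdenom x).ne'
  have hφ1 : φ 1 = 1 := by
    rw [hφdef]; simp only []
    rw [one_pow, mul_one, mul_one, div_self h1k.ne']
  have hmaps : MapsTo φ (Ico (0:ℝ) 1) (Icc (0:ℝ) 1) := by
    intro s hs
    constructor
    · exact div_nonneg (mul_nonneg h1k.le hs.1) (hdenom s).le
    · rw [div_le_one (hdenom s)]
      have hs0 : 0 ≤ s := hs.1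
      have hs1 : s < 1 := hs.2
      have hks : (0:ℝ) < 1 - k * s := by nlinarith
      nlinarith [mul_pos (by linarith : (0:ℝ) < 1 - s) hks]
  have hne : (𝓝[Ico (0:ℝ) 1] 1).NeBot := by
    apply mem_closure_iff_nhdsWithin_neBot.1
    rw [closure_Ico (by norm_num : (0:ℝ) ≠ 1)]
    exact ⟨by norm_num, le_refl 1⟩
  have h1mem : (1:ℝ) ∈ Icc (0:ℝ) 1 := ⟨by norm_num, le_refl 1⟩
  have t1 : Tendsto (fun b => (1 + k) * F b) (𝓝[Ico (0:ℝ) 1] 1) (𝓝 ((1 + k) * F 1)) := by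
    exact (tendsto_const_nhds.mul (((hF 1 h1mem).mono Ico_subset_Icc_self)))
  have tφ : Tendsto φ (𝓝[Ico (0:ℝ) 1] 1) (𝓝[Icc (0:ℝ) 1] 1) := by
    have := (hφcont.continuousAt (x := 1)).continuousWithinAt (s := Ico (0:ℝ) 1)
    have h2 := this.tendsto_nhdsWithin hmaps
    rwa [hφ1] at h2
  have t2 : Tendsto (fun b => G (φ b)) (𝓝[Ico (0:ℝ) 1] 1) (𝓝 (G 1)) :=
    (hG 1 h1mem).tendsto.comp tφ
  have heq : ∀ᶠ b in 𝓝[Ico (0:ℝ) 1] 1, (1 + k) * F b = G (φ b) := by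
    filter_upwards [self_mem_nhdsWithin] with b hb
    exact landen_sub hk0 hk1 hb.1 hb.2
  have hfinal : (1 + k) * F 1 = G 1 :=
    tendsto_nhds_unique (t1.congr' heq) t2
  exact hfinal
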